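/- Let φ : F → ℝ be locally Lipschitz. If (f_n) is a sequence in F converging to f₀ such that lim_n λ_{φ,ϕ}(f_n) = 0 for every finite subset ϕ of F, then λ_{φ,ϕ}(f₀) = 0 for every finite ϕ, hence 0 ∈ ∂φ(f₀); that is, f₀ is a critical point of φ. -/

import Mathlib

/- Setting: `F` (and `E`) are Fréchet spaces: complete topological vector spaces over ℝ
whose topology is generated by an increasing sequence of seminorms `p 0 ≤ p 1 ≤ ⋯`
(`Monotone p` together with `WithSeminorms p`).  The first seminorm of the family,
written `‖·‖¹` in the paper, is `p 0`.  The dual `F'` with its weak* topology is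
`WeakDual ℝ F`. -/

open Filter Topology

section Defs

variable {E F : Type*}
  [AddCommGroup E] [Module ℝ E] [UniformSpace E] [IsUniformAddGroup E] [ContinuousSMul ℝ E]
  [AddCommGroup F] [Module ℝ F] [UniformSpace F] [IsUniformAddGroup F] [ContinuousSMul ℝ F]

/-- Clarke's generalized directional derivative
`φ°(f;g) = limsup_{h → f, t ↓ 0} (φ(h+tg) − φ(h))/t`. -/
noncomputable def clarkeDeriv (φ : F → ℝ) (f g : F) : ℝ :=
  Filter.limsup (fun q : F × ℝ => (φ (q.1 + q.2 • g) - φ q.1) / q.2)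
    ((𝓝 f) ×ˢ (𝓝[>] (0 : ℝ)))

/-- The Clarke subdifferential `∂φ(f) = {f' ∈ F' : ⟨f',g⟩ ≤ φ°(f;g) ∀ g}`, a subset of
the dual equipped with the weak* topology. -/
def clarkeSubdiff (φ : F → ℝ) (f : F) : Set (WeakDual ℝ F) :=
  {u | ∀ g : F, u g ≤ clarkeDeriv φ f g}

/-- Locally Lipschitz with respect to the first seminorm `p 0` of the defining
increasing family of seminorms (as used throughout the paper). -/
def LocLip (p : ℕ → Seminorm ℝ F) (φ : F → ℝ) : Prop :=
  ∀ x : F, ∃ U ∈ 𝓝 x, ∃ K : ℝ, 0 ≤ K ∧ ∀ a ∈ U, ∀ b ∈ U, |φ a - φ b| ≤ K * (p 0) (a - b)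

/-- The weak* seminorm `ρ_ϕ(y) = sup_{x ∈ ϕ} |y x|` attached to a finite set `ϕ`. -/
noncomputable def dualSeminorm (s : Finset F) (y : WeakDual ℝ F) : ℝ :=
  ⨆ x ∈ s, |y x|

/-- `λ_{φ,ϕ}(f) = min_{y ∈ ∂φ(f)} ρ_ϕ(y)`. -/
noncomputable def lam (φ : F → ℝ) (s : Finset F) (f : F) : ℝ :=
  sInf (dualSeminorm s '' clarkeSubdiff φ f)

/-- The Chang Palais–Smale condition. -/
def ChangPS (φ : F → ℝ) : Prop :=
  ∀ u : ℕ → F, (∃ C : ℝ, ∀ n, |φ (u n)| ≤ C) →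
    (∀ s : Finset F, Tendsto (fun n => lam φ s (u n)) atTop (𝓝 0)) →
    ∃ g : ℕ → ℕ, StrictMono g ∧ ∃ x : F, Tendsto (u ∘ g) atTop (𝓝 x)

/-- The Chang Palais–Smale condition at level `c`. -/
def ChangPSAt (φ : F → ℝ) (c : ℝ) : Prop :=
  ∀ u : ℕ → F, Tendsto (fun n => φ (u n)) atTop (𝓝 c) →
    (∀ s : Finset F, Tendsto (fun n => lam φ s (u n)) atTop (𝓝 0)) →
    ∃ g : ℕ → ℕ, StrictMono g ∧ ∃ x : F, Tendsto (u ∘ g) atTop (𝓝 x)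

/-- Keller `C¹_c` on a set `U`, with derivative family `D`: directional derivatives exist,
each `D x` is continuous linear, and `(x,h) ↦ D x h` is jointly continuous. -/
def C1cOn (τ : E → F) (D : E → (E →L[ℝ] F)) (U : Set E) : Prop :=
  (∀ x ∈ U, ∀ h : E,
      Tendsto (fun t : ℝ => t⁻¹ • (τ (x + t • h) - τ x)) (𝓝[≠] (0 : ℝ)) (𝓝 (D x h))) ∧
  ContinuousOn (fun q : E × E => D q.1 q.2) (U ×ˢ (Set.univ : Set E))

/-- Keller `C¹_c` on a set (derivative existential). -/
def IsC1cOn (τ : E → F) (U : Set E) : Prop :=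
  ∃ D : E → (E →L[ℝ] F), C1cOn τ D U

/-- Local `C¹_c`-diffeomorphism: every point has an open neighbourhood mapped bijectively
onto an open set, `τ` being `C¹_c` there with a `C¹_c` inverse. -/
def IsLocalC1cDiffeo (τ : E → F) : Prop :=
  ∀ x : E, ∃ U : Set E, IsOpen U ∧ x ∈ U ∧ ∃ V : Set F, IsOpen V ∧ Set.BijOn τ U V ∧
    IsC1cOn τ U ∧ ∃ σ : F → E, (∀ y ∈ V, τ (σ y) = y) ∧ (∀ x' ∈ U, σ (τ x') = x') ∧
      IsC1cOn σ V

end Defs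

section Helpers

set_option linter.unusedSectionVars false

open Filter Topology

variable {F : Type*}
  [AddCommGroup F] [Module ℝ F] [UniformSpace F] [IsUniformAddGroup F] [ContinuousSMul ℝ F]

/-- The difference quotient. -/
noncomputable def quotFn (φ : F → ℝ) (g : F) (q : F × ℝ) : ℝ :=
  (φ (q.1 + q.2 • g) - φ q.1) / q.2

lemma clarkeDeriv_eq (φ : F → ℝ) (f g : F) :
    clarkeDeriv φ f g = Filter.limsup (quotFn φ g) ((𝓝 f) ×ˢ (𝓝[>] (0 : ℝ))) := rfl

lemma tendsto_base (f : F) (g : F) :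
    Tendsto (fun q : F × ℝ => q.1 + q.2 • g) ((𝓝 f) ×ˢ (𝓝[>] (0 : ℝ))) (𝓝 f) := by
  have h1 : Tendsto (fun q : F × ℝ => q.1) ((𝓝 f) ×ˢ (𝓝[>] (0 : ℝ))) (𝓝 f) := tendsto_fst
  have h2 : Tendsto (fun q : F × ℝ => q.2) ((𝓝 f) ×ˢ (𝓝[>] (0 : ℝ))) (𝓝 (0 : ℝ)) :=
    tendsto_snd.mono_right nhdsWithin_le_nhds
  have := h1.add (h2.smul_const g)
  simpa using this

lemma eventually_bound {φ : F → ℝ} {f : F} {U : Set F} (hU : U ∈ 𝓝 f) {K : ℝ}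
    (p0 : Seminorm ℝ F) (hK : ∀ a ∈ U, ∀ b ∈ U, |φ a - φ b| ≤ K * p0 (a - b)) (g : F) :
    ∀ᶠ q in (𝓝 f) ×ˢ (𝓝[>] (0 : ℝ)), |quotFn φ g q| ≤ K * p0 g := by
  have hUe : ∀ᶠ x in 𝓝 f, x ∈ U := hU
  have h1 : ∀ᶠ q : F × ℝ in (𝓝 f) ×ˢ (𝓝[>] (0 : ℝ)), q.1 ∈ U :=
    (tendsto_fst (f := 𝓝 f) (g := 𝓝[>] (0:ℝ))).eventually hUe
  have h3 : ∀ᶠ q : F × ℝ in (𝓝 f) ×ˢ (𝓝[>] (0 : ℝ)), q.1 + q.2 • g ∈ U :=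
    (tendsto_base f g).eventually hUe
  have h4 : ∀ᶠ q : F × ℝ in (𝓝 f) ×ˢ (𝓝[>] (0 : ℝ)), 0 < q.2 :=
    tendsto_snd.eventually self_mem_nhdsWithin
  filter_upwards [h1, h3, h4] with q hq1 hq3 hq4
  have hne : q.2 ≠ 0 := hq4.ne'
  have hdiff : |φ (q.1 + q.2 • g) - φ q.1| ≤ K * p0 (q.2 • g) := by
    have := hK _ hq3 _ hq1
    simpa using this
  have hsmul : p0 (q.2 • g) = q.2 * p0 g := by
    rw [map_smul_eq_mul, Real.norm_eq_abs, abs_of_pos hq4]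
  calc |quotFn φ g q| = |φ (q.1 + q.2 • g) - φ q.1| / q.2 := by
        rw [quotFn, abs_div, abs_of_pos hq4]
    _ ≤ (K * (q.2 * p0 g)) / q.2 := by
        rw [← hsmul]
        exact div_le_div_of_nonneg_right hdiff hq4.le |>.trans_eq (by rw [hsmul])
    _ = K * p0 g := by
        rw [show K * (q.2 * p0 g) = q.2 * (K * p0 g) by ring, mul_div_cancel_left₀ _ hne]

lemma exists_eventually_bound {p : ℕ → Seminorm ℝ F} {φ : F → ℝ} (hφ : LocLip p φ)
    (f g : F) : ∃ C, ∀ᶠ q in (𝓝 f) ×ˢ (𝓝[>] (0 : ℝ)), |quotFn φ g q| ≤ C := by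
  obtain ⟨U, hU, K, _, hK⟩ := hφ f
  exact ⟨K * p 0 g, eventually_bound hU (p 0) hK g⟩

lemma bddAbove_quot {p : ℕ → Seminorm ℝ F} {φ : F → ℝ} (hφ : LocLip p φ) (f g : F) :
    IsBoundedUnder (· ≤ ·) ((𝓝 f) ×ˢ (𝓝[>] (0 : ℝ))) (quotFn φ g) := by
  obtain ⟨C, hC⟩ := exists_eventually_bound hφ f g
  exact ⟨C, eventually_map.2 (hC.mono fun q hq => (abs_le.1 hq).2)⟩

lemma bddBelow_quot {p : ℕ → Seminorm ℝ F} {φ : F → ℝ} (hφ : LocLip p φ) (f g : F) :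
    IsBoundedUnder (· ≥ ·) ((𝓝 f) ×ˢ (𝓝[>] (0 : ℝ))) (quotFn φ g) := by
  obtain ⟨C, hC⟩ := exists_eventually_bound hφ f g
  exact ⟨-C, eventually_map.2 (hC.mono fun q hq => (abs_le.1 hq).1)⟩

lemma cobddLe_quot {p : ℕ → Seminorm ℝ F} {φ : F → ℝ} (hφ : LocLip p φ) (f g : F) :
    IsCoboundedUnder (· ≤ ·) ((𝓝 f) ×ˢ (𝓝[>] (0 : ℝ))) (quotFn φ g) :=
  (bddBelow_quot hφ f g).isCoboundedUnder_le

lemma cobddGe_quot {p : ℕ → Seminorm ℝ F} {φ : F → ℝ} (hφ : LocLip p φ) (f g : F) :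
    IsCoboundedUnder (· ≥ ·) ((𝓝 f) ×ˢ (𝓝[>] (0 : ℝ))) (quotFn φ g) :=
  (bddAbove_quot hφ f g).isCoboundedUnder_ge

lemma clarkeDeriv_le {φ : F → ℝ} {f : F} {U : Set F} (hU : U ∈ 𝓝 f) {K : ℝ}
    (p0 : Seminorm ℝ F) (hK : ∀ a ∈ U, ∀ b ∈ U, |φ a - φ b| ≤ K * p0 (a - b)) (g : F) :
    clarkeDeriv φ f g ≤ K * p0 g := by
  have hC := eventually_bound hU p0 hK g
  rw [clarkeDeriv_eq]
  refine limsup_le_of_le ?_ (hC.mono fun q hq => (abs_le.1 hq).2)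
  exact IsBoundedUnder.isCoboundedUnder_le
    ⟨-(K * p0 g), eventually_map.2 (hC.mono fun q hq => (abs_le.1 hq).1)⟩

lemma neg_le_clarkeDeriv {φ : F → ℝ} {f : F} {U : Set F} (hU : U ∈ 𝓝 f) {K : ℝ}
    (p0 : Seminorm ℝ F) (hK : ∀ a ∈ U, ∀ b ∈ U, |φ a - φ b| ≤ K * p0 (a - b)) (g : F) :
    -(K * p0 g) ≤ clarkeDeriv φ f g := by
  have hC := eventually_bound hU p0 hK g
  rw [clarkeDeriv_eq]
  refine le_limsup_of_frequently_le ((hC.mono fun q hq => (abs_le.1 hq).1).frequently) ?_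
  exact ⟨K * p0 g, eventually_map.2 (hC.mono fun q hq => (abs_le.1 hq).2)⟩

lemma limsup_comp_eq {α β : Type*} (u : β → ℝ) (m : α → β) (l : Filter α) :
    Filter.limsup (u ∘ m) l = Filter.limsup u (Filter.map m l) := by
  simp only [Filter.limsup, Filter.map_map]

lemma clarkeDeriv_add_le {p : ℕ → Seminorm ℝ F} {φ : F → ℝ} (hφ : LocLip p φ)
    (f g₁ g₂ : F) :
    clarkeDeriv φ f (g₁ + g₂) ≤ clarkeDeriv φ f g₁ + clarkeDeriv φ f g₂ := by
  set L := (𝓝 f) ×ˢ (𝓝[>] (0 : ℝ)) with hLdef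
  set m : F × ℝ → F × ℝ := fun q => (q.1 + q.2 • g₂, q.2) with hmdef
  have hm : Tendsto m L L := (tendsto_base f g₂).prodMk tendsto_snd
  have hid : quotFn φ (g₁ + g₂) = (quotFn φ g₁ ∘ m) + quotFn φ g₂ := by
    funext q
    have harg : q.1 + q.2 • (g₁ + g₂) = q.1 + q.2 • g₂ + q.2 • g₁ := by
      rw [smul_add]; abel
    simp only [quotFn, Pi.add_apply, Function.comp_apply, hmdef, harg]
    rw [← add_div, sub_add_sub_cancel]
  obtain ⟨C, hC⟩ := exists_eventually_bound hφ f g₁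
  have hCm : ∀ᶠ q in L, |quotFn φ g₁ (m q)| ≤ C := hm.eventually hC
  have h1 : IsBoundedUnder (· ≥ ·) L (quotFn φ g₁ ∘ m) :=
    ⟨-C, eventually_map.2 (hCm.mono fun q hq => (abs_le.1 hq).1)⟩
  have h2 : IsBoundedUnder (· ≤ ·) L (quotFn φ g₁ ∘ m) :=
    ⟨C, eventually_map.2 (hCm.mono fun q hq => (abs_le.1 hq).2)⟩
  have key : Filter.limsup ((quotFn φ g₁ ∘ m) + quotFn φ g₂) L ≤
      Filter.limsup (quotFn φ g₁ ∘ m) L + Filter.limsup (quotFn φ g₂) L :=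
    limsup_add_le h1 h2 (cobddLe_quot hφ f g₂) (bddAbove_quot hφ f g₂)
  rw [clarkeDeriv_eq, hid]
  refine key.trans (add_le_add ?_ le_rfl)
  rw [limsup_comp_eq]
  haveI : (Filter.map m L).NeBot := Filter.NeBot.map inferInstance m
  refine limsup_le_limsup_of_le hm ?_ (bddAbove_quot hφ f g₁)
  refine IsBoundedUnder.isCoboundedUnder_le ?_
  exact ⟨-C, by
    rw [eventually_map, eventually_map]
    exact hCm.mono fun q hq => (abs_le.1 hq).1⟩

lemma clarkeDeriv_smul {p : ℕ → Seminorm ℝ F} {φ : F → ℝ} (hφ : LocLip p φ)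
    (f g : F) {c : ℝ} (hc : 0 < c) :
    clarkeDeriv φ f (c • g) = c * clarkeDeriv φ f g := by
  set L := (𝓝 f) ×ˢ (𝓝[>] (0 : ℝ)) with hLdef
  have tends : ∀ {a : ℝ}, 0 < a → Tendsto (fun q : F × ℝ => (q.1, a * q.2)) L L := by
    intro a ha
    refine tendsto_fst.prodMk ?_
    have h2 : Tendsto (fun q : F × ℝ => a * q.2) L (𝓝 (0 : ℝ)) := by
      have := (tendsto_snd.mono_right nhdsWithin_le_nhds :
        Tendsto (fun q : F × ℝ => q.2) L (𝓝 (0:ℝ))).const_mul a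
      simpa using this
    refine tendsto_nhdsWithin_of_tendsto_nhds_of_eventually_within _ h2 ?_
    have h4 : ∀ᶠ q : F × ℝ in L, 0 < q.2 := tendsto_snd.eventually self_mem_nhdsWithin
    exact h4.mono fun q hq => mul_pos ha hq
  set m : F × ℝ → F × ℝ := fun q => (q.1, c * q.2) with hmdef
  have hmap : Filter.map m L = L := by
    refine le_antisymm (tends hc) ?_
    have hcomp : m ∘ (fun q : F × ℝ => (q.1, c⁻¹ * q.2)) = id := by
      funext q
      simp only [hmdef, Function.comp_apply, id_eq]
      rw [← mul_assoc, mul_inv_cancel₀ hc.ne', one_mul]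
    calc L = Filter.map (m ∘ fun q : F × ℝ => (q.1, c⁻¹ * q.2)) L := by rw [hcomp, Filter.map_id]
      _ = Filter.map m (Filter.map (fun q : F × ℝ => (q.1, c⁻¹ * q.2)) L) :=
        (Filter.map_map).symm
      _ ≤ Filter.map m L := Filter.map_mono (tends (inv_pos.mpr hc))
  have hq : quotFn φ (c • g) = fun q => c * (quotFn φ g ∘ m) q := by
    funext q
    have harg : q.1 + q.2 • (c • g) = q.1 + (c * q.2) • g := by
      rw [smul_smul, mul_comm]
    simp only [quotFn, Function.comp_apply, hmdef, harg]
    rcases eq_or_ne q.2 0 with h | h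
    · simp [h]
    · field_simp
  obtain ⟨C, hC⟩ := exists_eventually_bound hφ f g
  have hCm : ∀ᶠ q in L, |(quotFn φ g ∘ m) q| ≤ C := (tends hc).eventually hC
  have hbdd : IsBoundedUnder (· ≤ ·) L (quotFn φ g ∘ m) :=
    ⟨C, eventually_map.2 (hCm.mono fun q hq => (abs_le.1 hq).2)⟩
  have hcob : IsCoboundedUnder (· ≤ ·) L (quotFn φ g ∘ m) :=
    IsBoundedUnder.isCoboundedUnder_le
      ⟨-C, eventually_map.2 (hCm.mono fun q hq => (abs_le.1 hq).1)⟩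
  have hmono : Monotone (fun x : ℝ => c * x) := monotone_mul_left_of_nonneg hc.le
  have hmain := hmono.map_limsup_of_continuousAt (F := L) (quotFn φ g ∘ m)
    ((continuous_mul_left c).continuousAt) hbdd hcob
  rw [clarkeDeriv_eq, hq, clarkeDeriv_eq]
  calc Filter.limsup (fun q => c * (quotFn φ g ∘ m) q) L
      = c * Filter.limsup (quotFn φ g ∘ m) L := hmain.symm
    _ = c * Filter.limsup (quotFn φ g) L := by rw [limsup_comp_eq, hmap]

lemma subdiff_nonempty {p : ℕ → Seminorm ℝ F} (hsp : WithSeminorms p) {φ : F → ℝ}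
    (hφ : LocLip p φ) (f : F) : (clarkeSubdiff φ f).Nonempty := by
  obtain ⟨U, hU, K, hK0, hK⟩ := hφ f
  have hbound : ∀ g, clarkeDeriv φ f g ≤ K * p 0 g := clarkeDeriv_le hU (p 0) hK
  have hbound' : ∀ g, -(K * p 0 g) ≤ clarkeDeriv φ f g := neg_le_clarkeDeriv hU (p 0) hK
  have N_hom : ∀ c : ℝ, 0 < c → ∀ x, clarkeDeriv φ f (c • x) = c * clarkeDeriv φ f x :=
    fun c hc x => clarkeDeriv_smul hφ f x hc
  have N_add : ∀ x y, clarkeDeriv φ f (x + y) ≤ clarkeDeriv φ f x + clarkeDeriv φ f y :=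
    clarkeDeriv_add_le hφ f
  have hzero : (0:ℝ) ≤ clarkeDeriv φ f 0 := by
    have := hbound' 0
    simpa using this
  obtain ⟨ℓ, -, hℓ⟩ := exists_extension_of_le_sublinear ⟨⊥, 0⟩ (clarkeDeriv φ f) N_hom N_add
    (fun x => by
      have hx0 : (x : F) = 0 := (Submodule.mem_bot ℝ).mp x.2
      have h1 : (⟨⊥, 0⟩ : F →ₗ.[ℝ] ℝ) x = 0 := rfl
      rw [h1, hx0]
      exact hzero)
  have habs : ∀ x, |ℓ x| ≤ K * p 0 x := by
    intro x
    refine abs_le.2 ⟨?_, (hℓ x).trans (hbound x)⟩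
    have h1 : ℓ (-x) ≤ K * p 0 (-x) := (hℓ (-x)).trans (hbound (-x))
    rw [map_neg, map_neg_eq_map] at h1
    linarith
  have hcont : Continuous ℓ := by
    have h0 : ContinuousAt ℓ 0 := by
      rw [ContinuousAt, map_zero]
      have htend : Tendsto (fun x => K * p 0 x) (𝓝 0) (𝓝 (0:ℝ)) := by
        have := ((hsp.continuous_seminorm 0).tendsto (0:F)).const_mul K
        simpa using this
      exact squeeze_zero_norm (fun x => by simpa using habs x) htend
    exact continuous_of_continuousAt_zero ℓ h0
  exact ⟨(⟨ℓ, hcont⟩ : F →L[ℝ] ℝ), fun g => hℓ g⟩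

lemma dualSeminorm_nonneg (s : Finset F) (y : WeakDual ℝ F) : 0 ≤ dualSeminorm s y :=
  Real.iSup_nonneg fun _ => Real.iSup_nonneg fun _ => abs_nonneg _

lemma dualSeminorm_singleton (g : F) (y : WeakDual ℝ F) :
    dualSeminorm {g} y = |y g| := by
  refine le_antisymm ?_ ?_
  · refine Real.iSup_le (fun x => Real.iSup_le (fun hx => ?_) (abs_nonneg _)) (abs_nonneg _)
    rw [Finset.mem_singleton] at hx
    subst hx; exact le_rfl
  · have hb : BddAbove (Set.range fun x => ⨆ _ : x ∈ ({g} : Finset F), |y x|) := by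
      refine ⟨|y g|, ?_⟩
      rintro _ ⟨x, rfl⟩
      refine Real.iSup_le (fun hx => ?_) (abs_nonneg _)
      rw [Finset.mem_singleton] at hx
      subst hx; exact le_rfl
    have h1 := le_ciSup hb g
    calc |y g| = ⨆ _ : g ∈ ({g} : Finset F), |y g| :=
        (ciSup_pos (f := fun _ => |y g|) (Finset.mem_singleton_self g)).symm
      _ ≤ _ := h1

lemma dualSeminorm_zero (s : Finset F) : dualSeminorm s (0 : WeakDual ℝ F) = 0 := by
  refine le_antisymm ?_ (dualSeminorm_nonneg s 0)
  refine Real.iSup_le (fun x => Real.iSup_le (fun _ => ?_) le_rfl) le_rfl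
  have hx : (0 : WeakDual ℝ F) x = 0 := rfl
  simp [hx]

lemma lam_nonneg (φ : F → ℝ) (s : Finset F) (f : F) : 0 ≤ lam φ s f := by
  refine Real.sInf_nonneg ?_
  rintro x ⟨y, -, rfl⟩
  exact dualSeminorm_nonneg s y

lemma lam_eq_zero {φ : F → ℝ} {f : F} (h0 : (0 : WeakDual ℝ F) ∈ clarkeSubdiff φ f)
    (s : Finset F) : lam φ s f = 0 := by
  refine le_antisymm ?_ (lam_nonneg φ s f)
  have hb : BddBelow (dualSeminorm s '' clarkeSubdiff φ f) := by
    refine ⟨0, ?_⟩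
    rintro x ⟨y, -, rfl⟩
    exact dualSeminorm_nonneg s y
  have := csInf_le hb ⟨(0 : WeakDual ℝ F), h0, rfl⟩
  calc lam φ s f ≤ dualSeminorm s (0 : WeakDual ℝ F) := this
    _ = 0 := dualSeminorm_zero s

lemma exists_subdiff_abs_lt {φ : F → ℝ} {f : F} (hne : (clarkeSubdiff φ f).Nonempty)
    {g : F} {ε : ℝ} (hlt : lam φ {g} f < ε) :
    ∃ y ∈ clarkeSubdiff φ f, |y g| < ε := by
  obtain ⟨x, ⟨y, hy, rfl⟩, hxε⟩ := exists_lt_of_csInf_lt (hne.image _) hlt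
  exact ⟨y, hy, by rwa [dualSeminorm_singleton] at hxε⟩

end Helpers
/-- limits of almost-critical sequences are critical points. -/
theorem critical_of_lam_tendsto_zero
    {F : Type*} [AddCommGroup F] [Module ℝ F] [UniformSpace F] [IsUniformAddGroup F]
    [ContinuousSMul ℝ F] [CompleteSpace F]
    (p : ℕ → Seminorm ℝ F) (hmono : Monotone p) (hsp : WithSeminorms p)
    (φ : F → ℝ) (hφ : LocLip p φ)
    (fseq : ℕ → F) (f₀ : F)
    (hconv : Filter.Tendsto fseq Filter.atTop (𝓝 f₀))
    (hlam : ∀ s : Finset F, Filter.Tendsto (fun n => lam φ s (fseq n)) Filter.atTop (𝓝 0)) :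
    (∀ s : Finset F, lam φ s f₀ = 0) ∧ (0 : WeakDual ℝ F) ∈ clarkeSubdiff φ f₀ := by
  have key : ∀ g : F, 0 ≤ clarkeDeriv φ f₀ g := by
    intro g
    have main : ∀ ε : ℝ, 0 < ε → -ε ≤ clarkeDeriv φ f₀ g := by
      intro ε hε
      rw [clarkeDeriv_eq]
      refine Filter.le_limsup_of_frequently_le ?_ (bddAbove_quot hφ f₀ g)
      by_contra hnot
      rw [Filter.not_frequently] at hnot
      have hev : ∀ᶠ q in (𝓝 f₀) ×ˢ (𝓝[>] (0 : ℝ)), quotFn φ g q < -ε :=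
        hnot.mono fun q hq => not_le.1 hq
      rw [Filter.eventually_prod_iff] at hev
      obtain ⟨pa, hpa, pb, hpb, hpab⟩ := hev
      have hWn : ∀ᶠ n in Filter.atTop, ∀ᶠ x in 𝓝 (fseq n), pa x := by
        have hintm : f₀ ∈ interior {x | pa x} := mem_interior_iff_mem_nhds.mpr hpa
        have hint : ∀ᶠ n in Filter.atTop, fseq n ∈ interior {x | pa x} :=
          hconv.eventually (isOpen_interior.eventually_mem hintm)
        exact hint.mono fun n hn => mem_interior_iff_mem_nhds.mp hn
      have hlamev : ∀ᶠ n in Filter.atTop, lam φ {g} (fseq n) < ε :=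
        (hlam {g}).eventually_lt_const hε
      obtain ⟨n, hWn', hlamn⟩ := (hWn.and hlamev).exists
      obtain ⟨y, hy, hyg⟩ := exists_subdiff_abs_lt (subdiff_nonempty hsp hφ (fseq n)) hlamn
      have hlow : -ε < clarkeDeriv φ (fseq n) g :=
        lt_of_lt_of_le (neg_lt_neg hyg) ((neg_abs_le _).trans (hy g))
      have hevn : ∀ᶠ q in (𝓝 (fseq n)) ×ˢ (𝓝[>] (0 : ℝ)), quotFn φ g q < -ε :=
        Filter.eventually_prod_iff.mpr ⟨pa, hWn', pb, hpb, fun {_} hx1 {_} hy1 => hpab hx1 hy1⟩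
      have hup : clarkeDeriv φ (fseq n) g ≤ -ε := by
        rw [clarkeDeriv_eq]
        exact Filter.limsup_le_of_le (cobddLe_quot hφ (fseq n) g)
          (hevn.mono fun q hq => hq.le)
      exact absurd (hlow.trans_le hup) (lt_irrefl _)
    by_contra h
    push_neg at h
    have := main (-(clarkeDeriv φ f₀ g) / 2) (by linarith)
    linarith
  have h0 : (0 : WeakDual ℝ F) ∈ clarkeSubdiff φ f₀ := by
    intro g
    have : (0 : WeakDual ℝ F) g = 0 := rfl
    rw [this]
    exact key g
  exact ⟨fun s => lam_eq_zero h0 s, h0⟩
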